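/- Let t be a positive integer and let G and H be flower groups of the same type (c₀; c₁, …, c_k). Then there exists a bijection ψ : G → H such that ψ(1_G) = 1_H and ψ(g^t) = ψ(g)^t for every g ∈ G. -/

import Mathlib

/-- A cyclic subgroup `C` of `G` is a μ-subgroup if it is not contained in any cyclic
subgroup of `G` other than `C` itself. -/
def IsMuSubgroup {G : Type*} [Group G] (C : Subgroup G) : Prop :=
  IsCyclic ↥C ∧ ∀ K : Subgroup G, IsCyclic ↥K → C ≤ K → C = K

/-- A noncyclic group `G` is a flower group with pistil `C0` if any two distinct
μ-subgroups of `G` intersect exactly in `C0`. -/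
def IsFlowerGroup {G : Type*} [Group G] (C0 : Subgroup G) : Prop :=
  ¬ IsCyclic G ∧
    ∀ C C' : Subgroup G, IsMuSubgroup C → IsMuSubgroup C' → C ≠ C' → C ⊓ C' = C0

section Aux

open Subgroup

variable {G : Type*} [Group G]

/-- In a finite group, membership in `zpowers` is witnessed by a natural power. -/
lemma exists_nat_pow_of_mem_zpowers [Finite G] {a x : G} (h : x ∈ zpowers a) :
    ∃ m : ℕ, x = a ^ m := by
  obtain ⟨m, hm⟩ := (Submonoid.mem_powers_iff _ _).mp
    (((isOfFinOrder_of_finite a).mem_powers_iff_mem_zpowers).mpr h)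
  exact ⟨m, hm.symm⟩

lemma isCyclic_zpowers (a : G) : IsCyclic ↥(zpowers a) := by
  refine ⟨⟨⟨a, mem_zpowers a⟩, ?_⟩⟩
  rintro ⟨y, hy⟩
  obtain ⟨k, hk⟩ := mem_zpowers_iff.mp hy
  exact mem_zpowers_iff.mpr ⟨k, by ext; simpa⟩

/-- Every element of a finite group lies in some μ-subgroup. -/
lemma exists_muSubgroup [Finite G] (x : G) :
    ∃ C : Subgroup G, IsMuSubgroup C ∧ x ∈ C := by
  have hfin : Finite (Subgroup G) :=
    Finite.of_injective _ (SetLike.coe_injective (A := Subgroup G))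
  have hS : ({K : Subgroup G | IsCyclic ↥K ∧ x ∈ K}).Finite := Set.toFinite _
  obtain ⟨C, hC, hmax⟩ := Set.Finite.exists_maximalFor (fun K : Subgroup G => Nat.card K)
    {K : Subgroup G | IsCyclic ↥K ∧ x ∈ K} hS
    ⟨zpowers x, _root_.isCyclic_zpowers x, mem_zpowers x⟩
  refine ⟨C, ⟨hC.1, fun K hK hle => ?_⟩, hC.2⟩
  exact Subgroup.eq_of_le_of_card_ge hle
    (hmax (j := K) ⟨hK, hle hC.2⟩ (Subgroup.card_le_of_le hle))

/-- A cyclic subgroup is generated (as `zpowers`) by an element of the ambient group. -/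
lemma exists_zpowers_eq [Finite G] (P : Subgroup G) (h : IsCyclic ↥P) :
    ∃ g : G, zpowers g = P ∧ orderOf g = Nat.card P := by
  obtain ⟨g, hgen⟩ := h.exists_generator
  refine ⟨(g : G), ?_, ?_⟩
  · refine le_antisymm (zpowers_le.mpr g.2) fun y hy => ?_
    obtain ⟨kk, hk⟩ := mem_zpowers_iff.mp (hgen ⟨y, hy⟩)
    exact mem_zpowers_iff.mpr ⟨kk, by simpa using congrArg (Subtype.val) hk⟩
  · rw [Subgroup.orderOf_coe, orderOf_eq_card_of_forall_mem_zpowers hgen]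

/-- Uniqueness of the subgroup of a given order inside a cyclic group. -/
lemma subgroup_le_cyclic_eq [Finite G] {g : G} {n d : ℕ} (hn : orderOf g = n)
    (hd : d ∣ n) (hd0 : 0 < d) {K : Subgroup G} (hK : K ≤ zpowers g)
    (hcard : Nat.card K = d) : K = zpowers (g ^ (n / d)) := by
  have hn0 : 0 < n := hn ▸ orderOf_pos g
  have he0 : 0 < n / d := Nat.div_pos (Nat.le_of_dvd hn0 hd) hd0
  have hord : orderOf (g ^ (n / d)) = d := by
    rw [orderOf_pow, hn, Nat.gcd_eq_right (Nat.div_dvd_of_dvd hd),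
      Nat.div_div_self hd hn0.ne']
  refine Subgroup.eq_of_le_of_card_ge ?_ ?_
  · intro x hx
    obtain ⟨m, rfl⟩ := exists_nat_pow_of_mem_zpowers (hK hx)
    have h1 : orderOf (g ^ m) ∣ d := hcard ▸ Subgroup.orderOf_dvd_natCard K hx
    have h2 : g ^ (m * d) = 1 := by
      rw [pow_mul]
      exact orderOf_dvd_iff_pow_eq_one.mp h1
    have h3 : n ∣ m * d := hn ▸ orderOf_dvd_iff_pow_eq_one.mpr h2
    have h4 : n / d * d ∣ m * d := by rwa [Nat.div_mul_cancel hd]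
    obtain ⟨r, hr⟩ := (Nat.mul_dvd_mul_iff_right hd0).mp h4
    exact mem_zpowers_iff.mpr ⟨(r : ℤ), by
      rw [← zpow_natCast, ← zpow_natCast, ← zpow_mul, ← Nat.cast_mul, ← hr]⟩
  · rw [Nat.card_zpowers, hord, hcard]

/-- The key well-definedness statement for the glued bijection. -/
lemma keyW {G H : Type*} [Group G] [Group H] [Finite G] [Finite H]
    {k : ℕ} {c : Fin k → ℕ} {d : ℕ} (hd0 : 0 < d)
    {g : Fin k → G} {h : Fin k → H} {a : G} {b : H} {s u v : Fin k → ℕ}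
    (hgc : ∀ i, orderOf (g i) = c i) (hhc : ∀ i, orderOf (h i) = c i)
    (hdc : ∀ i, d ∣ c i)
    (hau : ∀ i, a = g i ^ (c i / d * u i))
    (hbv : ∀ i, b = h i ^ (c i / d * v i))
    (hsu : ∀ i, s i * u i ≡ v i [MOD d])
    (hinter : ∀ i j, i ≠ j → ∀ x : G,
      x ∈ zpowers (g i) → x ∈ zpowers (g j) → ∃ l : ℕ, x = a ^ l) :
    ∀ i j m m', g i ^ m = g j ^ m' → h i ^ (s i * m) = h j ^ (s j * m') := by
  have W0 : ∀ i m l, g i ^ m = a ^ l → h i ^ (s i * m) = b ^ l := by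
    intro i m l hml
    rw [hau i, ← pow_mul] at hml
    have h1 : m ≡ c i / d * u i * l [MOD c i] := by
      have := pow_eq_pow_iff_modEq.mp hml
      rwa [hgc i] at this
    have h2 : s i * m ≡ s i * (c i / d * u i * l) [MOD c i] := h1.mul_left _
    have h3 : c i / d * (s i * u i * l) ≡ c i / d * (v i * l) [MOD c i] := by
      have := ((hsu i).mul_right l).mul_left' (c i / d)
      rwa [Nat.div_mul_cancel (hdc i)] at this
    rw [hbv i, ← pow_mul]
    refine pow_eq_pow_iff_modEq.mpr ?_
    rw [hhc i]
    calc s i * m ≡ s i * (c i / d * u i * l) [MOD c i] := h2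
      _ = c i / d * (s i * u i * l) := by ring
      _ ≡ c i / d * (v i * l) [MOD c i] := h3
      _ = c i / d * v i * l := by ring
  intro i j m m' hmm
  rcases eq_or_ne i j with rfl | hij
  · refine pow_eq_pow_iff_modEq.mpr ?_
    rw [hhc i]
    have h1 : m ≡ m' [MOD c i] := by
      have := pow_eq_pow_iff_modEq.mp hmm
      rwa [hgc i] at this
    exact h1.mul_left _
  · obtain ⟨l, hl⟩ := hinter i j hij (g i ^ m)
      (Subgroup.pow_mem _ (mem_zpowers _) m)
      (hmm ▸ Subgroup.pow_mem _ (mem_zpowers (g j)) m')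
    rw [W0 i m l hl, W0 j m' l (hmm ▸ hl)]

/-- A function defined by choosing petal representations. -/
lemma choiceFun {G H : Type*} [Group G] [Group H] {k : ℕ}
    (g : Fin k → G) (h : Fin k → H) (s : Fin k → ℕ)
    (cover : ∀ x : G, ∃ p : Fin k × ℕ, x = g p.1 ^ p.2)
    (W : ∀ i j m m', g i ^ m = g j ^ m' → h i ^ (s i * m) = h j ^ (s j * m')) :
    ∃ f : G → H, ∀ i m, f (g i ^ m) = h i ^ (s i * m) := by
  choose p hp using cover
  exact ⟨fun x => h (p x).1 ^ (s (p x).1 * (p x).2),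
    fun i m => W _ i _ m (hp (g i ^ m)).symm⟩

end Aux

/-- If G and H are flower groups of the same type (c₀; c₁, …, c_k), then
there is a bijection ψ : G → H with ψ(1) = 1 and ψ(g^t) = ψ(g)^t for all g. -/
theorem stmt12 (t : ℕ) (ht : 0 < t)
    {G H : Type*} [Group G] [Finite G] [Group H] [Finite H]
    (CG : Subgroup G) (CH : Subgroup H)
    (hG : IsFlowerGroup CG) (hH : IsFlowerGroup CH)
    (k c0 : ℕ) (c : Fin k → ℕ)
    (PG : Fin k → Subgroup G) (PH : Fin k → Subgroup H)
    (hPGinj : Function.Injective PG) (hPHinj : Function.Injective PH)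
    (hPG : ∀ C : Subgroup G, IsMuSubgroup C ↔ ∃ i, C = PG i)
    (hPH : ∀ C : Subgroup H, IsMuSubgroup C ↔ ∃ i, C = PH i)
    (hcG0 : Nat.card CG = c0) (hcH0 : Nat.card CH = c0)
    (hcG : ∀ i, Nat.card (PG i) = c i) (hcH : ∀ i, Nat.card (PH i) = c i) :
    ∃ ψ : G ≃ H, ψ 1 = 1 ∧ ∀ g : G, ψ (g ^ t) = ψ g ^ t := by
  classical
  open Subgroup in
  -- basic positivity
  have hd0 : 0 < c0 := hcG0 ▸ Nat.card_pos
  have hc0 : ∀ i, 0 < c i := fun i => hcG i ▸ Nat.card_pos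
  -- covering by petals
  have coverG : ∀ x : G, ∃ i, x ∈ PG i := fun x => by
    obtain ⟨C, hC, hxC⟩ := exists_muSubgroup x
    obtain ⟨i, rfl⟩ := (hPG C).mp hC
    exact ⟨i, hxC⟩
  have coverH : ∀ x : H, ∃ i, x ∈ PH i := fun x => by
    obtain ⟨C, hC, hxC⟩ := exists_muSubgroup x
    obtain ⟨i, rfl⟩ := (hPH C).mp hC
    exact ⟨i, hxC⟩
  have hkpos : Nonempty (Fin k) := (coverG 1).elim fun i _ => ⟨i⟩
  -- there are at least two petals
  have two : ∀ i : Fin k, ∃ j, j ≠ i := by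
    intro i
    by_contra hcon
    push_neg at hcon
    have htop : PG i = ⊤ := by
      rw [eq_top_iff]
      intro x _
      obtain ⟨j, hj⟩ := coverG x
      rwa [hcon j] at hj
    have : IsCyclic ↥(PG i) := ((hPG (PG i)).mpr ⟨i, rfl⟩).1
    exact hG.1 (isCyclic_of_surjective (PG i).subtype
      (fun x => ⟨⟨x, htop.symm ▸ Subgroup.mem_top x⟩, rfl⟩))
  -- pistil is contained in every petal
  have hCGle : ∀ i, CG ≤ PG i := by
    intro i
    obtain ⟨j, hj⟩ := two i
    have hne : PG i ≠ PG j := fun hEq => hj (hPGinj hEq.symm)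
    have := hG.2 (PG i) (PG j) ((hPG _).mpr ⟨i, rfl⟩) ((hPG _).mpr ⟨j, rfl⟩) hne
    exact this ▸ (inf_le_left : PG i ⊓ PG j ≤ PG i)
  have hCHle : ∀ i, CH ≤ PH i := by
    intro i
    obtain ⟨j, hj⟩ := two i
    have hne : PH i ≠ PH j := fun hEq => hj (hPHinj hEq.symm)
    have := hH.2 (PH i) (PH j) ((hPH _).mpr ⟨i, rfl⟩) ((hPH _).mpr ⟨j, rfl⟩) hne
    exact this ▸ (inf_le_left : PH i ⊓ PH j ≤ PH i)
  have hdc : ∀ i, c0 ∣ c i := fun i => by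
    rw [← hcG0, ← hcG i]
    exact Subgroup.card_dvd_of_le (hCGle i)
  -- generators of the petals
  choose gg hggP hggord using fun i => exists_zpowers_eq (PG i) ((hPG _).mpr ⟨i, rfl⟩).1
  choose hh hhhP hhhord using fun i => exists_zpowers_eq (PH i) ((hPH _).mpr ⟨i, rfl⟩).1
  have hgc : ∀ i, orderOf (gg i) = c i := fun i => (hggord i).trans (hcG i)
  have hhc : ∀ i, orderOf (hh i) = c i := fun i => (hhhord i).trans (hcH i)
  -- the pistil inside each petal
  have hCGeq : ∀ i, CG = Subgroup.zpowers (gg i ^ (c i / c0)) := fun i =>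
    subgroup_le_cyclic_eq (hgc i) (hdc i) hd0
      (le_of_le_of_eq (hCGle i) (hggP i).symm) hcG0
  have hCHeq : ∀ i, CH = Subgroup.zpowers (hh i ^ (c i / c0)) := fun i =>
    subgroup_le_cyclic_eq (hhc i) (hdc i) hd0
      (le_of_le_of_eq (hCHle i) (hhhP i).symm) hcH0
  obtain ⟨i₀⟩ := hkpos
  obtain ⟨aa, haa⟩ : ∃ a : G, CG = Subgroup.zpowers a := ⟨_, hCGeq i₀⟩
  obtain ⟨bb, hbb⟩ : ∃ b : H, CH = Subgroup.zpowers b := ⟨_, hCHeq i₀⟩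
  have haord : orderOf aa = c0 := by rw [← Nat.card_zpowers, ← haa, hcG0]
  have hbord : orderOf bb = c0 := by rw [← Nat.card_zpowers, ← hbb, hcH0]
  have haCG : aa ∈ CG := by rw [haa]; exact Subgroup.mem_zpowers aa
  have hbCH : bb ∈ CH := by rw [hbb]; exact Subgroup.mem_zpowers bb
  -- express the pistil generator in each petal
  have hu : ∀ i, ∃ m : ℕ, aa = (gg i ^ (c i / c0)) ^ m := fun i =>
    exists_nat_pow_of_mem_zpowers (by rw [← hCGeq i]; exact haCG)
  have hv : ∀ i, ∃ m : ℕ, bb = (hh i ^ (c i / c0)) ^ m := fun i =>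
    exists_nat_pow_of_mem_zpowers (by rw [← hCHeq i]; exact hbCH)
  choose uu huu using hu
  choose vv hvv using hv
  have hau : ∀ i, aa = gg i ^ (c i / c0 * uu i) := fun i => by
    rw [pow_mul]; exact huu i
  have hbv : ∀ i, bb = hh i ^ (c i / c0 * vv i) := fun i => by
    rw [pow_mul]; exact hvv i
  -- coprimality of the exponents
  have hcopu : ∀ i, Nat.Coprime c0 (uu i) := by
    intro i
    have h2 : orderOf (gg i ^ (c i / c0)) = c0 := by
      rw [← Nat.card_zpowers, ← hCGeq i, hcG0]
    have h1 : c0 / Nat.gcd c0 (uu i) = c0 := by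
      rw [← h2, ← orderOf_pow, ← huu i, haord, h2]
    exact (Nat.div_eq_self.mp h1).resolve_left hd0.ne'
  have hcopv : ∀ i, Nat.Coprime c0 (vv i) := by
    intro i
    have h2 : orderOf (hh i ^ (c i / c0)) = c0 := by
      rw [← Nat.card_zpowers, ← hCHeq i, hcH0]
    have h1 : c0 / Nat.gcd c0 (vv i) = c0 := by
      rw [← h2, ← orderOf_pow, ← hvv i, hbord, h2]
    exact (Nat.div_eq_self.mp h1).resolve_left hd0.ne'
  -- construct the twisting exponents via unit lifting
  have hexists : ∀ i : Fin k, ∃ sq : ℕ × ℕ,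
      (sq.1 * uu i ≡ vv i [MOD c0]) ∧ (sq.2 * vv i ≡ uu i [MOD c0]) ∧
        (sq.1 * sq.2 ≡ 1 [MOD c i]) := by
    intro i
    have hne : NeZero (c i) := ⟨(hc0 i).ne'⟩
    have hne0 : NeZero c0 := ⟨hd0.ne'⟩
    obtain ⟨σ, hσ⟩ := ZMod.unitsMap_surjective (hdc i)
      (ZMod.unitOfCoprime _ (hcopv i).symm * (ZMod.unitOfCoprime _ (hcopu i).symm)⁻¹)
    have hcast : ∀ τ : (ZMod (c i))ˣ,
        ((((τ : ZMod (c i))).val : ℕ) : ZMod c0)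
          = ((ZMod.unitsMap (hdc i) τ : (ZMod c0)ˣ) : ZMod c0) := by
      intro τ
      rw [ZMod.unitsMap_def, Units.coe_map]
      simp only [MonoidHom.coe_coe, ZMod.castHom_apply]
      exact ZMod.natCast_val _
    refine ⟨(((σ : ZMod (c i))).val, ((σ⁻¹ : (ZMod (c i))ˣ) : ZMod (c i)).val), ?_, ?_, ?_⟩
    · rw [← ZMod.natCast_eq_natCast_iff, Nat.cast_mul, hcast σ, hσ,
        ← ZMod.coe_unitOfCoprime (uu i) (hcopu i).symm,
        ← ZMod.coe_unitOfCoprime (vv i) (hcopv i).symm,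
        ← Units.val_mul, inv_mul_cancel_right]
    · rw [← ZMod.natCast_eq_natCast_iff, Nat.cast_mul, hcast σ⁻¹, map_inv, hσ,
        ← ZMod.coe_unitOfCoprime (uu i) (hcopu i).symm,
        ← ZMod.coe_unitOfCoprime (vv i) (hcopv i).symm,
        mul_inv_rev, inv_inv, ← Units.val_mul, inv_mul_cancel_right]
    · rw [← ZMod.natCast_eq_natCast_iff, Nat.cast_mul, Nat.cast_one,
        ZMod.natCast_val, ZMod.natCast_val, ZMod.cast_id, ZMod.cast_id,
        ← Units.val_mul, mul_inv_cancel, Units.val_one]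
  choose sq hsu hs'v hss' using hexists
  set ss : Fin k → ℕ := fun i => (sq i).1 with hssdef
  set ss' : Fin k → ℕ := fun i => (sq i).2 with hss'def
  -- intersection conditions
  have hinterG : ∀ i j, i ≠ j → ∀ x : G,
      x ∈ Subgroup.zpowers (gg i) → x ∈ Subgroup.zpowers (gg j) → ∃ l : ℕ, x = aa ^ l := by
    intro i j hij x hxi hxj
    have hne : PG i ≠ PG j := fun hEq => hij (hPGinj hEq)
    have hinf := hG.2 (PG i) (PG j) ((hPG _).mpr ⟨i, rfl⟩) ((hPG _).mpr ⟨j, rfl⟩) hne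
    have hx : x ∈ CG := by
      rw [← hinf]
      exact ⟨(hggP i) ▸ hxi, (hggP j) ▸ hxj⟩
    exact exists_nat_pow_of_mem_zpowers (haa ▸ hx)
  have hinterH : ∀ i j, i ≠ j → ∀ x : H,
      x ∈ Subgroup.zpowers (hh i) → x ∈ Subgroup.zpowers (hh j) → ∃ l : ℕ, x = bb ^ l := by
    intro i j hij x hxi hxj
    have hne : PH i ≠ PH j := fun hEq => hij (hPHinj hEq)
    have hinf := hH.2 (PH i) (PH j) ((hPH _).mpr ⟨i, rfl⟩) ((hPH _).mpr ⟨j, rfl⟩) hne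
    have hx : x ∈ CH := by
      rw [← hinf]
      exact ⟨(hhhP i) ▸ hxi, (hhhP j) ▸ hxj⟩
    exact exists_nat_pow_of_mem_zpowers (hbb ▸ hx)
  -- well-definedness in both directions
  have W : ∀ i j m m', gg i ^ m = gg j ^ m' → hh i ^ (ss i * m) = hh j ^ (ss j * m') :=
    keyW hd0 hgc hhc hdc hau hbv hsu hinterG
  have W' : ∀ i j m m', hh i ^ m = hh j ^ m' → gg i ^ (ss' i * m) = gg j ^ (ss' j * m') :=
    keyW hd0 hhc hgc hdc hbv hau hs'v hinterH
  -- coverings in power form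
  have coverG' : ∀ x : G, ∃ p : Fin k × ℕ, x = gg p.1 ^ p.2 := by
    intro x
    obtain ⟨i, hi⟩ := coverG x
    obtain ⟨m, hm⟩ := exists_nat_pow_of_mem_zpowers ((hggP i).symm ▸ hi)
    exact ⟨⟨i, m⟩, hm⟩
  have coverH' : ∀ x : H, ∃ p : Fin k × ℕ, x = hh p.1 ^ p.2 := by
    intro x
    obtain ⟨i, hi⟩ := coverH x
    obtain ⟨m, hm⟩ := exists_nat_pow_of_mem_zpowers ((hhhP i).symm ▸ hi)
    exact ⟨⟨i, m⟩, hm⟩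
  obtain ⟨f, hf⟩ := choiceFun gg hh ss coverG' W
  obtain ⟨f', hf'⟩ := choiceFun hh gg ss' coverH' W'
  have hmod : ∀ (i : Fin k) (m : ℕ), ss' i * (ss i * m) ≡ m [MOD c i] := by
    intro i m
    calc ss' i * (ss i * m) = ss i * ss' i * m := by ring
      _ ≡ 1 * m [MOD c i] := (hss' i).mul_right m
      _ = m := one_mul m
  have hleft : Function.LeftInverse f' f := by
    intro x
    obtain ⟨⟨i, m⟩, rfl⟩ := coverG' x
    rw [hf i m, hf' i (ss i * m)]
    refine pow_eq_pow_iff_modEq.mpr ?_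
    rw [hgc i]
    exact hmod i m
  have hright : Function.RightInverse f' f := by
    intro x
    obtain ⟨⟨i, m⟩, rfl⟩ := coverH' x
    rw [hf' i m, hf i (ss' i * m)]
    refine pow_eq_pow_iff_modEq.mpr ?_
    rw [hhc i]
    calc ss i * (ss' i * m) = ss i * ss' i * m := by ring
      _ ≡ 1 * m [MOD c i] := (hss' i).mul_right m
      _ = m := one_mul m
  refine ⟨⟨f, f', hleft, hright⟩, ?_, ?_⟩
  · show f 1 = 1
    rw [show (1 : G) = gg i₀ ^ 0 from (pow_zero _).symm, hf i₀ 0, mul_zero, pow_zero]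
  · intro x
    show f (x ^ t) = f x ^ t
    obtain ⟨⟨i, m⟩, rfl⟩ := coverG' x
    rw [← pow_mul, hf i (m * t), hf i m, ← pow_mul, mul_assoc]
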